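/- Let κ ∈ (−1, 1) and λ1 ∈ [−1, 1]; set D := κ²λ1² − 1, s := κ·(λ1² − 1)/D, and τ := λ1·(κ² − 1)/D. Then the 4×4 complex matrix M := (1/2)(I⊗I) + (s/2)(σ1⊗I) + (τ/2)(σ1⊗σ1) − (λ1/2)(σ2⊗σ2) + (1/2)(σ3⊗σ3) is positive semidefinite if and only if κ = 0 or λ1 = 1 or λ1 = −1. -/

import Mathlib

open Matrix Kronecker ComplexOrder

noncomputable def σ1 : Matrix (Fin 2) (Fin 2) ℂ := !![0, 1; 1, 0]
noncomputable def σ2 : Matrix (Fin 2) (Fin 2) ℂ := !![0, -Complex.I; Complex.I, 0]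
noncomputable def σ3 : Matrix (Fin 2) (Fin 2) ℂ := !![1, 0; 0, -1]

private lemma stmt11_aux_eq (lam1 s τ : ℝ) (hs : s = 0) (hτ : τ = lam1) :
    (((1 : ℝ) / 2 : ℝ) • (((1 : Matrix (Fin 2) (Fin 2) ℂ) ⊗ₖ (1 : Matrix (Fin 2) (Fin 2) ℂ)))
        + ((s / 2 : ℝ) : ℂ) • (σ1 ⊗ₖ (1 : Matrix (Fin 2) (Fin 2) ℂ))
        + ((τ / 2 : ℝ) : ℂ) • (σ1 ⊗ₖ σ1)
        - ((lam1 / 2 : ℝ) : ℂ) • (σ2 ⊗ₖ σ2)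
        + (((1 : ℝ) / 2 : ℝ) : ℂ) • (σ3 ⊗ₖ σ3))
    = Matrix.of (fun p q : Fin 2 × Fin 2 =>
        if p = q ∧ (p = (0,0) ∨ p = (1,1)) then 1
        else if (p = (0,0) ∧ q = (1,1)) ∨ (p = (1,1) ∧ q = (0,0)) then (lam1 : ℂ)
        else 0) := by
  subst hs hτ
  ext ⟨i,j⟩ ⟨k,l⟩
  fin_cases i <;> fin_cases j <;> fin_cases k <;> fin_cases l <;>
    simp [σ1, σ2, σ3, Matrix.one_apply, Prod.ext_iff] <;> ring

private lemma stmt11_aux_psd (lam1 : ℝ) (h1 : -1 ≤ lam1) (h2 : lam1 ≤ 1) :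
    (Matrix.of (fun p q : Fin 2 × Fin 2 =>
        if p = q ∧ (p = (0,0) ∨ p = (1,1)) then 1
        else if (p = (0,0) ∧ q = (1,1)) ∨ (p = (1,1) ∧ q = (0,0)) then (lam1 : ℂ)
        else 0)).PosSemidef := by
  rw [Matrix.posSemidef_iff_dotProduct_mulVec]
  constructor
  · ext ⟨i,j⟩ ⟨k,l⟩
    fin_cases i <;> fin_cases j <;> fin_cases k <;> fin_cases l <;>
      simp [Matrix.conjTranspose_apply, Prod.ext_iff]
  · intro x
    have e : star x ⬝ᵥ (Matrix.of (fun p q : Fin 2 × Fin 2 =>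
        if p = q ∧ (p = (0,0) ∨ p = (1,1)) then 1
        else if (p = (0,0) ∧ q = (1,1)) ∨ (p = (1,1) ∧ q = (0,0)) then (lam1 : ℂ)
        else 0)) *ᵥ x
        = (((1+lam1)/2 : ℝ) : ℂ) * ((starRingEnd ℂ) (x (0,0) + x (1,1)) * (x (0,0) + x (1,1)))
          + (((1-lam1)/2 : ℝ) : ℂ) * ((starRingEnd ℂ) (x (0,0) - x (1,1)) * (x (0,0) - x (1,1))) := by
      simp [dotProduct, Matrix.mulVec, Fintype.sum_prod_type, Fin.sum_univ_two, Prod.ext_iff]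
      ring
    rw [e, ← Complex.normSq_eq_conj_mul_self, ← Complex.normSq_eq_conj_mul_self]
    have n1 := Complex.normSq_nonneg (x (0,0) + x (1,1))
    have n2 := Complex.normSq_nonneg (x (0,0) - x (1,1))
    have key : (0:ℝ) ≤ (1+lam1)/2 * Complex.normSq (x (0,0) + x (1,1))
        + (1-lam1)/2 * Complex.normSq (x (0,0) - x (1,1)) := by nlinarith
    exact_mod_cast key

/-- reverse-direction Choi matrix of a phase-damping channel in the
σ3 basis (λ3 = 1, λ2 = −λ1). -/
theorem stmt11 (κ lam1 D s τ : ℝ) (hκ : κ ∈ Set.Ioo (-1 : ℝ) 1)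
    (hlam1 : lam1 ∈ Set.Icc (-1 : ℝ) 1)
    (hD : D = κ ^ 2 * lam1 ^ 2 - 1)
    (hs : s = κ * (lam1 ^ 2 - 1) / D)
    (hτ : τ = lam1 * (κ ^ 2 - 1) / D) :
    (((1 : ℝ) / 2 : ℝ) • (((1 : Matrix (Fin 2) (Fin 2) ℂ) ⊗ₖ (1 : Matrix (Fin 2) (Fin 2) ℂ)))
        + ((s / 2 : ℝ) : ℂ) • (σ1 ⊗ₖ (1 : Matrix (Fin 2) (Fin 2) ℂ))
        + ((τ / 2 : ℝ) : ℂ) • (σ1 ⊗ₖ σ1)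
        - ((lam1 / 2 : ℝ) : ℂ) • (σ2 ⊗ₖ σ2)
        + (((1 : ℝ) / 2 : ℝ) : ℂ) • (σ3 ⊗ₖ σ3)).PosSemidef
    ↔ (κ = 0 ∨ lam1 = 1 ∨ lam1 = -1) := by
  obtain ⟨hκ1, hκ2⟩ := hκ
  obtain ⟨hl1, hl2⟩ := hlam1
  have hD0 : D ≠ 0 := by
    rw [hD]
    intro habs
    nlinarith [mul_nonneg (sq_nonneg κ) (by nlinarith : (0:ℝ) ≤ 1 - lam1^2)]
  constructor
  · intro h
    have key := h.dotProduct_mulVec_nonneg (fun p => if p = ((0:Fin 2),(1:Fin 2)) then 1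
      else if p = (1,1) then ((-s/2 : ℝ):ℂ) else 0)
    have e : star (fun p => if p = ((0:Fin 2),(1:Fin 2)) then (1:ℂ)
        else if p = (1,1) then ((-s/2 : ℝ):ℂ) else 0) ⬝ᵥ
        (((1 : ℝ) / 2 : ℝ) • (((1 : Matrix (Fin 2) (Fin 2) ℂ) ⊗ₖ (1 : Matrix (Fin 2) (Fin 2) ℂ)))
          + ((s / 2 : ℝ) : ℂ) • (σ1 ⊗ₖ (1 : Matrix (Fin 2) (Fin 2) ℂ))
          + ((τ / 2 : ℝ) : ℂ) • (σ1 ⊗ₖ σ1)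
          - ((lam1 / 2 : ℝ) : ℂ) • (σ2 ⊗ₖ σ2)
          + (((1 : ℝ) / 2 : ℝ) : ℂ) • (σ3 ⊗ₖ σ3)) *ᵥ
        (fun p => if p = ((0:Fin 2),(1:Fin 2)) then 1
          else if p = (1,1) then ((-s/2 : ℝ):ℂ) else 0)
        = ((-(s^2)/4 : ℝ) : ℂ) := by
      simp [dotProduct, Matrix.mulVec, Fintype.sum_prod_type, Fin.sum_univ_two, Prod.ext_iff,
        σ1, σ2, σ3, Matrix.one_apply]
      ring
    rw [e, Complex.zero_le_real] at key
    have hs0 : s = 0 := by nlinarith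
    rw [hs, div_eq_zero_iff] at hs0
    rcases hs0 with hs0 | hs0
    · rcases mul_eq_zero.mp hs0 with h0 | h0
      · exact Or.inl h0
      · have : (lam1 - 1) * (lam1 + 1) = 0 := by nlinarith
        rcases mul_eq_zero.mp this with h1 | h1
        · exact Or.inr (Or.inl (by linarith))
        · exact Or.inr (Or.inr (by linarith))
    · exact absurd hs0 hD0
  · intro hc
    have hsτ : s = 0 ∧ τ = lam1 := by
      rcases hc with h0 | h0 | h0 <;> subst h0
      · refine ⟨by rw [hs, zero_mul, zero_div], ?_⟩
        have hD' : D = -1 := by rw [hD]; ring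
        rw [hτ, hD']; norm_num
      · have hne : κ^2 - 1 ≠ 0 := by nlinarith
        refine ⟨by rw [hs]; norm_num, ?_⟩
        have hD' : D = κ^2 - 1 := by rw [hD]; ring
        rw [hτ, hD', one_mul, div_self hne]
      · have hne : κ^2 - 1 ≠ 0 := by nlinarith
        refine ⟨by rw [hs]; norm_num, ?_⟩
        have hD' : D = κ^2 - 1 := by rw [hD]; ring
        rw [hτ, hD', neg_one_mul, neg_div, div_self hne]
    rw [stmt11_aux_eq lam1 s τ hsτ.1 hsτ.2]
    exact stmt11_aux_psd lam1 hl1 hl2
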